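/- Let $(R,\mathfrak{m})$ be a Noetherian local ring and $I$ an ideal. Then $\mathrm{qacogd}(I) = \min\{\mathrm{qacogd}((I+z)/z) \mid z \text{ a minimal prime of } R\}$. -/

import Mathlib

open IsLocalRing

noncomputable section

/-- The completion of a local ring at its maximal ideal. -/
abbrev Cmpl (A : Type*) [CommRing A] [IsLocalRing A] : Type _ :=
  AdicCompletion (maximalIdeal A) A

variable (R : Type*) [CommRing R]

/-- `p` is a quintasymptotic prime of `I`: there is a minimal prime `z` of the completion
`(R_p)^*` of the localization at `p` such that `Rad (I (R_p)^* + z) = p (R_p)^*`. -/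
def IsQStar (I p : Ideal R) [p.IsPrime] : Prop :=
  I ≤ p ∧ ∃ z ∈ minimalPrimes (Cmpl (Localization.AtPrime p)),
    (Ideal.map (algebraMap (Localization.AtPrime p) (Cmpl (Localization.AtPrime p)))
        (Ideal.map (algebraMap R (Localization.AtPrime p)) I) ⊔ z).radical =
      Ideal.map (algebraMap (Localization.AtPrime p) (Cmpl (Localization.AtPrime p)))
        (maximalIdeal (Localization.AtPrime p))

/-- The set `Q̄*(I)` of quintasymptotic primes of `I`. -/
def QStarSet (I : Ideal R) : Set (Ideal R) :=
  {p | ∃ h : p.IsPrime, letI := h; IsQStar R I p}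

/-- `xs` is a quintasymptotic sequence over `I`. -/
def IsQASeq (I : Ideal R) (xs : List R) : Prop :=
  I ⊔ Ideal.span {a | a ∈ xs} ≠ ⊤ ∧
  ∀ i : Fin xs.length, ∀ p ∈ QStarSet R (I ⊔ Ideal.span {a | a ∈ xs.take i}), xs.get i ∉ p

/-- `xs` is a maximal quintasymptotic sequence over `I`. -/
def IsMaxQASeq (I : Ideal R) (xs : List R) : Prop :=
  IsQASeq R I xs ∧ ∀ y : R, ¬ IsQASeq R I (xs ++ [y])

/-- The quintasymptotic cograde of an ideal of a local ring. -/
def qacogd [IsLocalRing R] (I : Ideal R) : WithBot ℕ∞ :=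
  ⨅ z ∈ minimalPrimes (Cmpl R),
    ringKrullDim ((Cmpl R) ⧸ (Ideal.map (algebraMap R (Cmpl R)) I ⊔ z))

/-- The height of an ideal. -/
def idealHeight (I : Ideal R) : WithBot ℕ∞ :=
  ⨅ p, ⨅ h : p ∈ I.minimalPrimes,
    letI : p.IsPrime := h.1.1
    ringKrullDim (Localization.AtPrime p)

end


section AuxProof

open AdicCompletion

section ZeroDiv

variable {S : Type*} [CommRing S]

/-- Every element of a minimal prime is a zero divisor. -/
lemma aux_exists_mul_eq_zero {q : Ideal S} (hq : q ∈ minimalPrimes S) {a : S} (ha : a ∈ q) :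
    ∃ y : S, y ≠ 0 ∧ a * y = 0 := by
  classical
  haveI hqp : q.IsPrime := hq.1.1
  have hnil : IsNilpotent (algebraMap S (Localization q.primeCompl) a) := by
    have h := IsLocalization.AtPrime.radical_map_of_mem_minimalPrimes
      (A := Localization q.primeCompl) q ⊥ hq
    have hm : algebraMap S (Localization q.primeCompl) a ∈
        q.map (algebraMap S (Localization q.primeCompl)) := Ideal.mem_map_of_mem _ ha
    rw [← h, Ideal.map_bot] at hm
    obtain ⟨k, hk⟩ := hm
    exact ⟨k, Ideal.mem_bot.mp hk⟩
  obtain ⟨n, hn⟩ := hnil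
  rw [← map_pow] at hn
  obtain ⟨⟨s, hs⟩, hsn⟩ := (IsLocalization.map_eq_zero_iff q.primeCompl _ _).mp hn
  have hP : ∃ n : ℕ, ∃ s : S, s ∉ q ∧ a ^ n * s = 0 :=
    ⟨n, s, hs, by rw [mul_comm]; exact hsn⟩
  set n0 := Nat.find hP with hn0def
  obtain ⟨s0, hs0, hs0e⟩ := Nat.find_spec hP
  have hn0 : n0 ≠ 0 := by
    intro h
    rw [hn0def] at h
    rw [h, pow_zero, one_mul] at hs0e
    exact hs0 (hs0e ▸ q.zero_mem)
  refine ⟨a ^ (n0 - 1) * s0, ?_, ?_⟩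
  · intro h0
    exact Nat.find_min hP (m := n0 - 1) (by omega) ⟨s0, hs0, h0⟩
  · rw [← mul_assoc, ← pow_succ']
    have : n0 - 1 + 1 = n0 := by omega
    rw [this, hn0def]
    exact hs0e

/-- Every element of a prime minimal over `J` is a zero divisor modulo `J`. -/
lemma aux_exists_mul_mem {J q : Ideal S} (hq : q ∈ J.minimalPrimes) {a : S} (ha : a ∈ q) :
    ∃ x : S, x ∉ J ∧ a * x ∈ J := by
  have h1 := Ideal.minimalPrimes_eq_comap (I := J)
  rw [h1] at hq
  obtain ⟨qb, hqb, rfl⟩ := hq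
  have hma : Ideal.Quotient.mk J a ∈ qb := ha
  obtain ⟨y, hy0, hy⟩ := aux_exists_mul_eq_zero hqb hma
  obtain ⟨x, rfl⟩ := Ideal.Quotient.mk_surjective y
  refine ⟨x, ?_, ?_⟩
  · intro hxJ
    exact hy0 (Ideal.Quotient.eq_zero_iff_mem.mpr hxJ)
  · rw [← map_mul] at hy
    exact Ideal.Quotient.eq_zero_iff_mem.mp hy

end ZeroDiv

section QuotCompletion

variable {R : Type*} [CommRing R] [IsLocalRing R] (z : Ideal R)

lemma aux_map_mk_maximalIdeal [IsLocalRing (R ⧸ z)] :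
    (maximalIdeal R).map (Ideal.Quotient.mk z) = maximalIdeal (R ⧸ z) := by
  have hzt : z ≠ ⊤ := by
    intro h
    have : (1 : R ⧸ z) = 0 := by
      rw [← map_one (Ideal.Quotient.mk z)]
      exact Ideal.Quotient.eq_zero_iff_mem.mpr (h ▸ trivial)
    exact one_ne_zero this
  apply le_antisymm
  · rw [Ideal.map_le_iff_le_comap]
    intro r hr
    simp only [Ideal.mem_comap, mem_maximalIdeal, mem_nonunits_iff]
    intro hu
    obtain ⟨s, hs⟩ := hu.exists_right_inv
    obtain ⟨t, rfl⟩ := Ideal.Quotient.mk_surjective s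
    rw [← map_mul, ← map_one (Ideal.Quotient.mk z), Ideal.Quotient.mk_eq_mk_iff_sub_mem] at hs
    have hm : r * t - 1 ∈ maximalIdeal R := le_maximalIdeal hzt hs
    have h1 : (1 : R) ∈ maximalIdeal R := by
      have := (maximalIdeal R).sub_mem (Ideal.mul_mem_right t _ hr) hm
      simpa using this
    exact (maximalIdeal.isMaximal R).ne_top ((Ideal.eq_top_iff_one _).mpr h1)
  · intro x hx
    obtain ⟨r, rfl⟩ := Ideal.Quotient.mk_surjective x
    have hr : r ∈ maximalIdeal R := by
      by_contra hrn
      have hru : IsUnit r := by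
        rw [mem_maximalIdeal, mem_nonunits_iff, not_not] at hrn
        exact hrn
      have : IsUnit (Ideal.Quotient.mk z r) := hru.map _
      rw [mem_maximalIdeal, mem_nonunits_iff] at hx
      exact hx this
    exact Ideal.mem_map_of_mem _ hr

lemma aux_comap_mk_pow [IsLocalRing (R ⧸ z)] (n : ℕ) :
    Ideal.comap (Ideal.Quotient.mk z) ((maximalIdeal (R ⧸ z)) ^ n) = maximalIdeal R ^ n ⊔ z := by
  rw [← aux_map_mk_maximalIdeal z, ← Ideal.map_pow,
    Ideal.comap_map_of_surjective _ Ideal.Quotient.mk_surjective, ← RingHom.ker_eq_comap_bot,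
    Ideal.mk_ker]

lemma aux_smul_top (S : Type*) [CommRing S] (J : Ideal S) : (J • ⊤ : Ideal S) = J := by
  ext x; simp

/-- Componentwise reduction map `R ⧸ 𝔪ⁿ →+* (R⧸z) ⧸ 𝔪̄ⁿ`. -/
noncomputable def cphi [IsLocalRing (R ⧸ z)] (n : ℕ) :
    R ⧸ (maximalIdeal R ^ n • ⊤ : Ideal R) →+*
      (R ⧸ z) ⧸ (maximalIdeal (R ⧸ z) ^ n • ⊤ : Ideal (R ⧸ z)) :=
  Ideal.quotientMap _ (Ideal.Quotient.mk z) (by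
    rw [aux_smul_top, aux_smul_top, aux_comap_mk_pow]
    exact le_sup_left)

lemma cphi_mk [IsLocalRing (R ⧸ z)] (n : ℕ) (x : R) :
    cphi z n (Submodule.Quotient.mk x) = Submodule.Quotient.mk (Ideal.Quotient.mk z x) := by
  rw [Ideal.Quotient.mk_eq_mk, Ideal.Quotient.mk_eq_mk, cphi, Ideal.quotientMap_mk]

end QuotCompletion

section Cpi

open AdicCompletion

variable {R : Type*} [CommRing R] [IsLocalRing R] (z : Ideal R) [IsLocalRing (R ⧸ z)]

lemma cphi_compat {m n : ℕ} (hmn : m ≤ n) (x : R ⧸ (maximalIdeal R ^ n • ⊤ : Ideal R)) :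
    transitionMap (maximalIdeal (R ⧸ z)) (R ⧸ z) hmn (cphi z n x) =
      cphi z m (transitionMap (maximalIdeal R) R hmn x) := by
  obtain ⟨a, rfl⟩ := Submodule.Quotient.mk_surjective _ x
  rw [cphi_mk]
  rfl

/-- The canonical ring hom from the completion of `R` to the completion of `R ⧸ z`. -/
noncomputable def cpi : AdicCompletion (maximalIdeal R) R →+* Cmpl (R ⧸ z) where
  toFun x := ⟨fun n => cphi z n (x.val n), by
    intro m n hmn
    rw [cphi_compat z hmn (x.val n), x.property hmn]⟩
  map_one' := AdicCompletion.ext fun n => map_one (cphi z n)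
  map_mul' x y := AdicCompletion.ext fun n => map_mul (cphi z n) (x.val n) (y.val n)
  map_zero' := AdicCompletion.ext fun n => map_zero (cphi z n)
  map_add' x y := AdicCompletion.ext fun n => map_add (cphi z n) (x.val n) (y.val n)

lemma cpi_val (x : AdicCompletion (maximalIdeal R) R) (n : ℕ) :
    (cpi z x).val n = cphi z n (x.val n) := rfl

lemma val_algebraMap (r : R) (n : ℕ) :
    (algebraMap R (AdicCompletion (maximalIdeal R) R) r).val n = Submodule.Quotient.mk r := rfl

lemma cpi_algebraMap (r : R) :
    cpi z (algebraMap R (AdicCompletion (maximalIdeal R) R) r) =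
      algebraMap (R ⧸ z) (Cmpl (R ⧸ z)) (Ideal.Quotient.mk z r) := by
  apply AdicCompletion.ext
  intro n
  rw [cpi_val, val_algebraMap, cphi_mk]
  rfl

end Cpi

section Surj

open AdicCompletion

variable {R : Type*} [CommRing R] [IsLocalRing R] (z : Ideal R) [IsLocalRing (R ⧸ z)]

lemma cpi_step (y : Cmpl (R ⧸ z)) (n : ℕ) (a : R)
    (ha : Submodule.Quotient.mk (p := (maximalIdeal (R ⧸ z) ^ n • ⊤ : Ideal (R ⧸ z)))
      (Ideal.Quotient.mk z a) = y.val n) :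
    ∃ b : R, Submodule.Quotient.mk (p := (maximalIdeal (R ⧸ z) ^ (n + 1) • ⊤ : Ideal (R ⧸ z)))
      (Ideal.Quotient.mk z b) = y.val (n + 1) ∧ a - b ∈ (maximalIdeal R ^ n : Ideal R) := by
  obtain ⟨u', hu'⟩ := Submodule.Quotient.mk_surjective _ (y.val (n + 1))
  obtain ⟨u, rfl⟩ := Ideal.Quotient.mk_surjective u'
  have htrans : transitionMap (maximalIdeal (R ⧸ z)) (R ⧸ z) (Nat.le_succ n) (y.val (n + 1)) =
      y.val n := y.property (Nat.le_succ n)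
  rw [← hu'] at htrans
  change Submodule.Quotient.mk (p := (maximalIdeal (R ⧸ z) ^ n • ⊤ : Ideal (R ⧸ z)))
    (Ideal.Quotient.mk z u) = y.val n at htrans
  have hd : Ideal.Quotient.mk z (a - u) ∈ (maximalIdeal (R ⧸ z) ^ n • ⊤ : Ideal (R ⧸ z)) := by
    rw [← Submodule.Quotient.mk_eq_zero, map_sub, Submodule.Quotient.mk_sub, ha, ← htrans,
      sub_self]
  rw [aux_smul_top] at hd
  have hd2 : a - u ∈ maximalIdeal R ^ n ⊔ z := by
    rw [← aux_comap_mk_pow]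
    exact hd
  obtain ⟨c, hc, w, hw, hcw⟩ := Submodule.mem_sup.mp hd2
  refine ⟨a - c, ?_, by simpa using hc⟩
  have : Ideal.Quotient.mk z (a - c) = Ideal.Quotient.mk z u := by
    have : a - c = u + w := by linear_combination -hcw
    rw [this, map_add, Ideal.Quotient.eq_zero_iff_mem.mpr hw, add_zero]
  rw [this, hu']

lemma cpi_surjective : Function.Surjective (cpi z) := by
  intro y
  -- build a lifting sequence by recursion
  have h0 : ∃ a : R, Submodule.Quotient.mk (p := (maximalIdeal (R ⧸ z) ^ 0 • ⊤ : Ideal (R ⧸ z)))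
      (Ideal.Quotient.mk z a) = y.val 0 := by
    haveI : Subsingleton ((R ⧸ z) ⧸ (maximalIdeal (R ⧸ z) ^ 0 • ⊤ : Ideal (R ⧸ z))) := by
      rw [Submodule.Quotient.subsingleton_iff]
      simp [Ideal.one_eq_top]
    exact ⟨0, Subsingleton.elim _ _⟩
  let F : ∀ n : ℕ, {a : R // Submodule.Quotient.mk
      (p := (maximalIdeal (R ⧸ z) ^ n • ⊤ : Ideal (R ⧸ z))) (Ideal.Quotient.mk z a) = y.val n} :=
    fun n => Nat.rec ⟨h0.choose, h0.choose_spec⟩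
      (fun n p => ⟨(cpi_step z y n p.1 p.2).choose, (cpi_step z y n p.1 p.2).choose_spec.1⟩) n
  have hF : ∀ n : ℕ, (F n).1 - (F (n + 1)).1 ∈ (maximalIdeal R ^ n : Ideal R) :=
    fun n => (cpi_step z y n (F n).1 (F n).2).choose_spec.2
  have hcauchy : ∀ n, (fun k => (F k).1) n ≡ (fun k => (F k).1) (n + 1)
      [SMOD (maximalIdeal R ^ n • ⊤ : Submodule R R)] := by
    intro n
    rw [SModEq.sub_mem]
    have := hF n
    rwa [show (maximalIdeal R ^ n • ⊤ : Submodule R R) = (maximalIdeal R ^ n : Ideal R) from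
      aux_smul_top R _]
  refine ⟨AdicCompletion.mk (maximalIdeal R) R
    (AdicCauchySequence.mk (maximalIdeal R) R (fun k => (F k).1) hcauchy), ?_⟩
  apply AdicCompletion.ext
  intro n
  rw [cpi_val]
  have hval : (AdicCompletion.mk (maximalIdeal R) R
      (AdicCauchySequence.mk (maximalIdeal R) R (fun k => (F k).1) hcauchy)).val n =
      Submodule.Quotient.mk (F n).1 := rfl
  rw [hval, cphi_mk]
  exact (F n).2

end Surj

section Ker

open AdicCompletion

variable {R : Type*} [CommRing R] [IsLocalRing R] [IsNoetherianRing R] (z : Ideal R)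
  [IsLocalRing (R ⧸ z)]

lemma aux_mem_smul_top_iff (n : ℕ) (b : R ⧸ z) :
    b ∈ (maximalIdeal (R ⧸ z) ^ n • ⊤ : Ideal (R ⧸ z)) ↔
      b ∈ (maximalIdeal R ^ n • ⊤ : Submodule R (R ⧸ z)) := by
  have h1 : (maximalIdeal R ^ n • ⊤ : Submodule R (R ⧸ z)) =
      Submodule.map (z.mkQ) (maximalIdeal R ^ n • ⊤ : Submodule R R) := by
    rw [Submodule.map_smul'', Submodule.map_top, Submodule.range_mkQ]
  rw [aux_smul_top, h1,
    show (maximalIdeal R ^ n • ⊤ : Submodule R R) = (maximalIdeal R ^ n : Ideal R) from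
      aux_smul_top R _,
    ← aux_map_mk_maximalIdeal z, ← Ideal.map_pow]
  constructor
  · intro hb
    obtain ⟨a, ha, rfl⟩ :=
      (Ideal.mem_map_iff_of_surjective _ Ideal.Quotient.mk_surjective).mp hb
    exact ⟨a, ha, rfl⟩
  · rintro ⟨a, ha, rfl⟩
    exact Ideal.mem_map_of_mem _ ha

lemma cpi_ker :
    RingHom.ker (cpi z) = Ideal.map (algebraMap R (AdicCompletion (maximalIdeal R) R)) z := by
  apply le_antisymm
  · intro x hx
    rw [RingHom.mem_ker] at hx
    have hx' : ∀ n, cphi z n (x.val n) = 0 := fun n =>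
      congrArg (fun y : Cmpl (R ⧸ z) => y.val n) hx
    have hFx : AdicCompletion.map (maximalIdeal R) z.mkQ x = 0 := by
      apply AdicCompletion.ext
      intro n
      rw [AdicCompletion.map_val_apply]
      obtain ⟨a, ha⟩ := Submodule.Quotient.mk_surjective _ (x.val n)
      rw [← ha, LinearMap.reduceModIdeal_apply, val_zero_apply, Submodule.Quotient.mk_eq_zero,
        ← aux_mem_smul_top_iff z n]
      have h2 := hx' n
      rw [← ha, cphi_mk, Submodule.Quotient.mk_eq_zero] at h2
      exact h2
    have hexact := AdicCompletion.map_exact (I := maximalIdeal R)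
      (Submodule.injective_subtype z) (LinearMap.exact_subtype_mkQ z) (Submodule.mkQ_surjective z)
    obtain ⟨y, hy⟩ := (hexact x).mp hFx
    obtain ⟨t, ht⟩ := AdicCompletion.ofTensorProduct_surjective_of_finite (maximalIdeal R) z y
    have hnat := LinearMap.congr_fun
      (AdicCompletion.ofTensorProduct_naturality (maximalIdeal R) (z.subtype)) t
    rw [LinearMap.comp_apply, LinearMap.comp_apply, ht, hy] at hnat
    rw [hnat]
    clear hnat ht hy hFx hx hx'
    induction t using TensorProduct.induction_on with
    | zero => simp
    | tmul c g =>
        simp only [TensorProduct.AlgebraTensorModule.map_tmul, LinearMap.id_coe, id_eq,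
          AdicCompletion.ofTensorProduct_tmul]
        have hofg : AdicCompletion.of (maximalIdeal R) R g.1 =
            algebraMap R (AdicCompletion (maximalIdeal R) R) g.1 := rfl
        rw [Submodule.coe_subtype, hofg]
        exact Ideal.mul_mem_left _ _ (Ideal.mem_map_of_mem _ g.2)
    | add t1 t2 h1 h2 =>
        rw [map_add, map_add]
        exact Ideal.add_mem _ h1 h2
  · rw [Ideal.map_le_iff_le_comap]
    intro r hr
    rw [Ideal.mem_comap, RingHom.mem_ker, cpi_algebraMap,
      Ideal.Quotient.eq_zero_iff_mem.mpr hr, _root_.map_zero]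

end Ker



section QacogdQuot

variable {R : Type*} [CommRing R] [IsLocalRing R] [IsNoetherianRing R]
  (z : Ideal R) [IsLocalRing (R ⧸ z)]

lemma qacogd_quot (I : Ideal R) :
    qacogd (R ⧸ z) (Ideal.map (Ideal.Quotient.mk z) I) =
      ⨅ w ∈ (Ideal.map (algebraMap R (Cmpl R)) z).minimalPrimes,
        ringKrullDim ((Cmpl R) ⧸ (Ideal.map (algebraMap R (Cmpl R)) I ⊔ w)) := by
  have hsurj := cpi_surjective z
  have hker := cpi_ker z
  have hmin : (Ideal.map (algebraMap R (Cmpl R)) z).minimalPrimes =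
      Ideal.comap (cpi z) '' minimalPrimes (Cmpl (R ⧸ z)) := by
    have h := Ideal.comap_minimalPrimes_eq_of_surjective hsurj (⊥ : Ideal (Cmpl (R ⧸ z)))
    rw [← RingHom.ker_eq_comap_bot, hker] at h
    exact h
  rw [qacogd, hmin, iInf_image]
  apply iInf_congr; intro w
  apply iInf_congr; intro hw
  have hJ : Ideal.map (algebraMap (R ⧸ z) (Cmpl (R ⧸ z))) (Ideal.map (Ideal.Quotient.mk z) I)
      = Ideal.map (cpi z) (Ideal.map (algebraMap R (Cmpl R)) I) := by
    rw [Ideal.map_map, Ideal.map_map,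
      show (algebraMap (R ⧸ z) (Cmpl (R ⧸ z))).comp (Ideal.Quotient.mk z) =
        (cpi z).comp (algebraMap R (Cmpl R)) from RingHom.ext fun r => (cpi_algebraMap z r).symm]
  have hsup : Ideal.map (algebraMap (R ⧸ z) (Cmpl (R ⧸ z))) (Ideal.map (Ideal.Quotient.mk z) I) ⊔ w
      = Ideal.map (cpi z)
          (Ideal.map (algebraMap R (Cmpl R)) I ⊔ Ideal.comap (cpi z) w) := by
    rw [Ideal.map_sup, hJ, Ideal.map_comap_of_surjective _ hsurj]
  have hcomap : Ideal.comap (cpi z)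
      (Ideal.map (algebraMap (R ⧸ z) (Cmpl (R ⧸ z))) (Ideal.map (Ideal.Quotient.mk z) I) ⊔ w)
      = Ideal.map (algebraMap R (Cmpl R)) I ⊔ Ideal.comap (cpi z) w := by
    rw [hsup, Ideal.comap_map_of_surjective _ hsurj, ← RingHom.ker_eq_comap_bot, hker]
    rw [sup_eq_left.mpr]
    refine le_trans ?_ le_sup_right
    rw [← hker]
    intro u hu
    rw [RingHom.mem_ker] at hu
    rw [Ideal.mem_comap, hu]
    exact w.zero_mem
  have hgsurj : Function.Surjective
      ((Ideal.Quotient.mk (Ideal.map (algebraMap (R ⧸ z) (Cmpl (R ⧸ z)))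
        (Ideal.map (Ideal.Quotient.mk z) I) ⊔ w)).comp (cpi z)) :=
    Ideal.Quotient.mk_surjective.comp hsurj
  have hgker : RingHom.ker ((Ideal.Quotient.mk (Ideal.map (algebraMap (R ⧸ z) (Cmpl (R ⧸ z)))
        (Ideal.map (Ideal.Quotient.mk z) I) ⊔ w)).comp (cpi z))
      = Ideal.map (algebraMap R (Cmpl R)) I ⊔ Ideal.comap (cpi z) w := by
    rw [← RingHom.comap_ker, Ideal.mk_ker, hcomap]
  calc ringKrullDim ((Cmpl (R ⧸ z)) ⧸ (Ideal.map (algebraMap (R ⧸ z) (Cmpl (R ⧸ z)))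
        (Ideal.map (Ideal.Quotient.mk z) I) ⊔ w))
      = ringKrullDim ((Cmpl R) ⧸ RingHom.ker ((Ideal.Quotient.mk
          (Ideal.map (algebraMap (R ⧸ z) (Cmpl (R ⧸ z)))
            (Ideal.map (Ideal.Quotient.mk z) I) ⊔ w)).comp (cpi z))) :=
        (ringKrullDim_eq_of_ringEquiv (RingHom.quotientKerEquivOfSurjective hgsurj)).symm
    _ = ringKrullDim ((Cmpl R) ⧸ (Ideal.map (algebraMap R (Cmpl R)) I ⊔
          Ideal.comap (cpi z) w)) :=
        ringKrullDim_eq_of_ringEquiv (Ideal.quotEquivOfEq hgker)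

end QacogdQuot

section Flatness

open AdicCompletion TensorProduct

variable {R : Type*} [CommRing R] [IsLocalRing R] [IsNoetherianRing R] {z : Ideal R} [z.IsPrime]

lemma aux_smul_inj {a : R} (ha : a ∉ z) (x : AdicCompletion (maximalIdeal R) R)
    (hx : a • x ∈ (z • ⊤ : Submodule R (AdicCompletion (maximalIdeal R) R))) :
    x ∈ (z • ⊤ : Submodule R (AdicCompletion (maximalIdeal R) R)) := by
  haveI : Module.Flat R (AdicCompletion (maximalIdeal R) R) :=
    AdicCompletion.flat_of_isNoetherian (maximalIdeal R)
  -- multiplication by `a` on `R ⧸ z` is injective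
  let f : (R ⧸ z) →ₗ[R] (R ⧸ z) := a • LinearMap.id
  have hf : Function.Injective f := by
    intro u v huv
    obtain ⟨r, rfl⟩ := Ideal.Quotient.mk_surjective u
    obtain ⟨s, rfl⟩ := Ideal.Quotient.mk_surjective v
    simp only [f, LinearMap.smul_apply, LinearMap.id_coe, id_eq] at huv
    rw [← Ideal.Quotient.mk_eq_mk, ← Ideal.Quotient.mk_eq_mk, ← Submodule.Quotient.mk_smul,
      ← Submodule.Quotient.mk_smul] at huv
    have h2 : Ideal.Quotient.mk z a * Ideal.Quotient.mk z r =
        Ideal.Quotient.mk z a * Ideal.Quotient.mk z s := by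
      rw [← map_mul, ← map_mul]
      exact huv
    have ha' : Ideal.Quotient.mk z a ≠ 0 := fun h0 =>
      ha (Ideal.Quotient.eq_zero_iff_mem.mp h0)
    exact mul_left_cancel₀ ha' h2
  have hinj := Module.Flat.lTensor_preserves_injective_linearMap (M := AdicCompletion (maximalIdeal R) R) f hf
  let E := TensorProduct.tensorQuotEquivQuotSMul (AdicCompletion (maximalIdeal R) R) z
  let aQ : (AdicCompletion (maximalIdeal R) R) ⧸ (z • ⊤ : Submodule R (AdicCompletion (maximalIdeal R) R)) →ₗ[R] (AdicCompletion (maximalIdeal R) R) ⧸ (z • ⊤ : Submodule R (AdicCompletion (maximalIdeal R) R)) :=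
    Submodule.mapQ _ _ (a • LinearMap.id) (by
      intro y hy
      simp only [LinearMap.smul_apply, LinearMap.id_coe, id_eq, Submodule.mem_comap]
      exact Submodule.smul_mem _ a hy)
  have hcomm : (E.toLinearMap ∘ₗ LinearMap.lTensor (AdicCompletion (maximalIdeal R) R) f) = aQ ∘ₗ E.toLinearMap := by
    refine TensorProduct.ext' fun c u => ?_
    obtain ⟨r, rfl⟩ := Ideal.Quotient.mk_surjective u
    simp only [LinearMap.comp_apply, LinearEquiv.coe_coe, LinearMap.lTensor_tmul]
    have h1 : f (Ideal.Quotient.mk z r) = Ideal.Quotient.mk z (a * r) := by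
      simp only [f, LinearMap.smul_apply, LinearMap.id_coe, id_eq]
      rw [← Ideal.Quotient.mk_eq_mk, ← Submodule.Quotient.mk_smul]
      rfl
    rw [h1]
    have hE : ∀ s : R, E (c ⊗ₜ[R] (Ideal.Quotient.mk z s)) =
        Submodule.Quotient.mk (s • c) := by
      intro s
      simp only [E, TensorProduct.tensorQuotEquivQuotSMul, LinearEquiv.trans_apply,
        TensorProduct.comm_tmul, ← Ideal.Quotient.mk_eq_mk]
      exact TensorProduct.quotTensorEquivQuotSMul_mk_tmul z s c
    rw [hE, hE]
    rw [Submodule.mapQ_apply]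
    simp only [LinearMap.smul_apply, LinearMap.id_coe, id_eq]
    rw [smul_smul, mul_comm]
  have hx0 : aQ (Submodule.Quotient.mk x) = 0 := by
    rw [Submodule.mapQ_apply]
    simp only [LinearMap.smul_apply, LinearMap.id_coe, id_eq]
    rw [Submodule.Quotient.mk_eq_zero]
    exact hx
  have h1 : E (LinearMap.lTensor (AdicCompletion (maximalIdeal R) R) f (E.symm (Submodule.Quotient.mk x))) = 0 := by
    have := LinearMap.congr_fun hcomm (E.symm (Submodule.Quotient.mk x))
    simp only [LinearMap.comp_apply, LinearEquiv.coe_coe] at this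
    rw [this, LinearEquiv.apply_symm_apply]
    exact hx0
  have h2 : LinearMap.lTensor (AdicCompletion (maximalIdeal R) R) f
      (E.symm (Submodule.Quotient.mk x)) = 0 := E.map_eq_zero_iff.mp h1
  have h3 : E.symm (Submodule.Quotient.mk x) = 0 :=
    hinj (h2.trans (_root_.map_zero _).symm)
  have h4 : (Submodule.Quotient.mk x :
      (AdicCompletion (maximalIdeal R) R) ⧸
        (z • ⊤ : Submodule R (AdicCompletion (maximalIdeal R) R))) = 0 :=
    E.symm.map_eq_zero_iff.mp h3
  rwa [Submodule.Quotient.mk_eq_zero] at h4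

end Flatness

section MinPrimes

variable {R : Type*} [CommRing R] [IsLocalRing R] [IsNoetherianRing R]

lemma aux_comap_of_minimal_over {z : Ideal R} (hz : z ∈ minimalPrimes R)
    {w : Ideal (Cmpl R)}
    (hw : w ∈ (Ideal.map (algebraMap R (Cmpl R)) z).minimalPrimes) :
    Ideal.comap (algebraMap R (Cmpl R)) w = z := by
  haveI : z.IsPrime := hz.1.1
  apply le_antisymm
  · intro a haw
    rw [Ideal.mem_comap] at haw
    by_contra ha
    obtain ⟨x, hxKz, haxKz⟩ := aux_exists_mul_mem hw haw
    have h1 : a • x ∈ (z • ⊤ : Submodule R (Cmpl R)) := by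
      rw [Ideal.smul_top_eq_map, Submodule.restrictScalars_mem]
      rw [← Algebra.smul_def] at haxKz
      exact haxKz
    have h2 := aux_smul_inj ha x h1
    rw [Ideal.smul_top_eq_map, Submodule.restrictScalars_mem] at h2
    exact hxKz h2
  · exact Ideal.map_le_iff_le_comap.mp hw.1.2

lemma aux_minPrimes_iff {w : Ideal (Cmpl R)} :
    w ∈ minimalPrimes (Cmpl R) ↔
      ∃ z ∈ minimalPrimes R, w ∈ (Ideal.map (algebraMap R (Cmpl R)) z).minimalPrimes := by
  constructor
  · intro hw
    haveI : w.IsPrime := hw.1.1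
    haveI : (Ideal.comap (algebraMap R (Cmpl R)) w).IsPrime := Ideal.comap_isPrime _ w
    obtain ⟨z, hz, hzle⟩ :=
      Ideal.exists_minimalPrimes_le (I := (⊥ : Ideal R))
        (J := Ideal.comap (algebraMap R (Cmpl R)) w) bot_le
    refine ⟨z, hz, ⟨⟨hw.1.1, Ideal.map_le_iff_le_comap.mpr hzle⟩, ?_⟩⟩
    intro v hv hvw
    exact hw.2 ⟨hv.1, bot_le⟩ hvw
  · rintro ⟨z, hz, hw⟩
    haveI : w.IsPrime := hw.1.1
    refine ⟨⟨hw.1.1, bot_le⟩, ?_⟩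
    intro v hv hvw
    haveI : v.IsPrime := hv.1
    have h1 : Ideal.comap (algebraMap R (Cmpl R)) v ≤ z := by
      rw [← aux_comap_of_minimal_over hz hw]
      exact Ideal.comap_mono hvw
    have h2 : z ≤ Ideal.comap (algebraMap R (Cmpl R)) v :=
      hz.2 ⟨Ideal.comap_isPrime _ v, bot_le⟩ h1
    exact hw.2 ⟨hv.1, Ideal.map_le_iff_le_comap.mpr h2⟩ hvw

end MinPrimes


end AuxProof

/-- `qacogd I = min {qacogd ((I+z)/z) : z a minimal prime of R}`. -/
theorem qacogd_eq_iInf_quotient (R : Type*) [CommRing R] [IsLocalRing R] [IsNoetherianRing R]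
    (I : Ideal R) :
    qacogd R I = ⨅ z, ⨅ h : z ∈ minimalPrimes R,
      letI : Nontrivial (R ⧸ z) := Ideal.Quotient.nontrivial_iff.mpr h.1.1.ne_top
      letI : IsLocalRing (R ⧸ z) :=
        IsLocalRing.of_surjective' (Ideal.Quotient.mk z) Ideal.Quotient.mk_surjective
      qacogd (R ⧸ z) (Ideal.map (Ideal.Quotient.mk z) I) := by
  have hRHS : (⨅ z, ⨅ h : z ∈ minimalPrimes R,
      letI : Nontrivial (R ⧸ z) := Ideal.Quotient.nontrivial_iff.mpr h.1.1.ne_top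
      letI : IsLocalRing (R ⧸ z) :=
        IsLocalRing.of_surjective' (Ideal.Quotient.mk z) Ideal.Quotient.mk_surjective
      qacogd (R ⧸ z) (Ideal.map (Ideal.Quotient.mk z) I)) =
      ⨅ z, ⨅ _ : z ∈ minimalPrimes R,
        ⨅ w ∈ (Ideal.map (algebraMap R (Cmpl R)) z).minimalPrimes,
          ringKrullDim ((Cmpl R) ⧸ (Ideal.map (algebraMap R (Cmpl R)) I ⊔ w)) := by
    refine iInf_congr fun z => iInf_congr fun h => ?_
    letI : Nontrivial (R ⧸ z) := Ideal.Quotient.nontrivial_iff.mpr h.1.1.ne_top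
    letI : IsLocalRing (R ⧸ z) :=
      IsLocalRing.of_surjective' (Ideal.Quotient.mk z) Ideal.Quotient.mk_surjective
    exact qacogd_quot z I
  rw [hRHS, qacogd]
  apply le_antisymm
  · refine le_iInf fun z => le_iInf fun hz => le_iInf fun w => le_iInf fun hw => ?_
    exact iInf₂_le w (aux_minPrimes_iff.mpr ⟨z, hz, hw⟩)
  · refine le_iInf fun w => le_iInf fun hw => ?_
    obtain ⟨z, hz, hwz⟩ := aux_minPrimes_iff.mp hw
    refine le_trans (iInf_le _ z) (le_trans (iInf_le _ hz) ?_)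
    exact le_trans (iInf_le _ w) (iInf_le _ hwz)
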